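/- Let F be a Borel probability measure on [0,1] with density f with respect to Lebesgue measure, and suppose there exist constants c > 0, β > −1 and δ > 0 such that f(1−x) = c x^β + O(x^{β+δ}) as x → 0⁺. Then the moment zeta function ζ_F(s) = ∑_{k=1}^∞ m_k(F)^s converges for every real s > 1/(1+β). -/

import Mathlib

open MeasureTheory Real Set Filter

lemma moment_aux_sum {u a b : ℕ → ℝ} {s : ℝ} (hs : 0 < s)
    (hu0 : ∀ k, 0 ≤ u k) (ha0 : ∀ k, 0 ≤ a k) (hb0 : ∀ k, 0 ≤ b k)
    (hub : ∀ k, u k ≤ a k + b k)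
    (hsa : Summable (fun k => a k ^ s)) (hsb : Summable (fun k => b k ^ s)) :
    Summable (fun k => u k ^ s) := by
  refine Summable.of_nonneg_of_le (fun k => rpow_nonneg (hu0 k) s)
    (f := fun k => (2:ℝ) ^ s * (a k ^ s + b k ^ s)) ?_ ((hsa.add hsb).mul_left _)
  intro k
  have h1 : u k ^ s ≤ (a k + b k) ^ s := rpow_le_rpow (hu0 k) (hub k) hs.le
  have h2 : a k + b k ≤ 2 * max (a k) (b k) := by
    rcases max_cases (a k) (b k) with ⟨h, h'⟩ | ⟨h, h'⟩ <;> rw [h] <;> linarith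
  have h3 : (a k + b k) ^ s ≤ (2 * max (a k) (b k)) ^ s :=
    rpow_le_rpow (add_nonneg (ha0 k) (hb0 k)) h2 hs.le
  have h4 : (2 * max (a k) (b k)) ^ s = 2 ^ s * max (a k) (b k) ^ s :=
    mul_rpow (by norm_num) (le_max_of_le_left (ha0 k))
  have h5 : max (a k) (b k) ^ s ≤ a k ^ s + b k ^ s := by
    rcases max_cases (a k) (b k) with ⟨h, _⟩ | ⟨h, _⟩ <;> rw [h]
    · nlinarith [rpow_nonneg (hb0 k) s]
    · nlinarith [rpow_nonneg (ha0 k) s]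
  calc u k ^ s ≤ (2 * max (a k) (b k)) ^ s := le_trans h1 h3
    _ = 2 ^ s * max (a k) (b k) ^ s := h4
    _ ≤ 2 ^ s * (a k ^ s + b k ^ s) := mul_le_mul_of_nonneg_left h5 (by positivity)

theorem moment_zeta_converges
    (f : ℝ → ℝ) (hmf : Measurable f) (hnn : ∀ x, 0 ≤ f x)
    (hsupp : ∀ x, x ∉ Set.Icc (0 : ℝ) 1 → f x = 0)
    (hprob : ∫ x in (0 : ℝ)..1, f x = 1)
    (c β δ : ℝ) (hc : 0 < c) (hβ : -1 < β) (hδ : 0 < δ)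
    (hasymp : Asymptotics.IsBigO (nhdsWithin 0 (Set.Ioi (0 : ℝ)))
      (fun x => f (1 - x) - c * x ^ β) (fun x => x ^ (β + δ))) :
    ∀ s : ℝ, 1 / (1 + β) < s →
      Summable (fun k : ℕ => (∫ x in (0 : ℝ)..1, x ^ (k + 1) * f x) ^ s) := by
  intro s hs
  have h1β : (0:ℝ) < 1 + β := by linarith
  have hs0 : 0 < s := lt_trans (by positivity) hs
  have hsβ : 1 < (β + 1) * s := by
    rw [div_lt_iff₀ h1β] at hs; nlinarith
  -- f is integrable on (0,1]
  have hfint : IntegrableOn f (Ioc 0 1) volume := by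
    by_contra h
    rw [intervalIntegral.integral_of_le zero_le_one, MeasureTheory.integral_undef h] at hprob
    norm_num at hprob
  have hfii : IntervalIntegrable f volume 0 1 :=
    (intervalIntegrable_iff_integrableOn_Ioc_of_le zero_le_one).mpr hfint
  -- the moment integrands are integrable
  have hint : ∀ k : ℕ, IntegrableOn (fun x : ℝ => x ^ (k+1) * f x) (Ioc 0 1) volume := by
    intro k
    refine hfint.mono' (((measurable_id.pow_const _).mul hmf).aestronglyMeasurable) ?_
    filter_upwards [ae_restrict_mem measurableSet_Ioc] with x hx
    rw [Real.norm_eq_abs, abs_of_nonneg (mul_nonneg (pow_nonneg hx.1.le _) (hnn x))]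
    calc x ^ (k+1) * f x ≤ 1 * f x :=
          mul_le_mul_of_nonneg_right (pow_le_one₀ hx.1.le hx.2) (hnn x)
      _ = f x := one_mul _
  have hii : ∀ k : ℕ, IntervalIntegrable (fun x : ℝ => x ^ (k+1) * f x) volume 0 1 :=
    fun k => (intervalIntegrable_iff_integrableOn_Ioc_of_le zero_le_one).mpr (hint k)
  -- extract asymptotic bound
  obtain ⟨C, hC⟩ := hasymp.bound
  rw [Filter.eventually_iff] at hC
  obtain ⟨u, hu, huC⟩ := mem_nhdsGT_iff_exists_Ioo_subset.mp hC
  set ε : ℝ := min u (1/2) with hεdef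
  have hε0 : 0 < ε := lt_min hu (by norm_num)
  have hε2 : ε ≤ 1/2 := min_le_right _ _
  have hε1 : (1:ℝ) - ε < 1 := by linarith
  have h1ε0 : (0:ℝ) < 1 - ε := by linarith
  set A : ℝ := max C 0 with hAdef
  set B : ℝ := c + A with hBdef
  have hA0 : 0 ≤ A := le_max_right _ _
  have hB : 0 < B := add_pos_of_pos_of_nonneg hc hA0
  have hfb : ∀ y ∈ Ioo (0:ℝ) ε, f (1 - y) ≤ B * y ^ β := by
    intro y hy
    have hy0 : 0 < y := hy.1
    have h := huC ⟨hy0, lt_of_lt_of_le hy.2 (min_le_left _ _)⟩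
    simp only [mem_setOf_eq, Real.norm_eq_abs] at h
    have hy1 : y ≤ 1 := by have := hy.2; linarith
    have h2 : y ^ (β + δ) ≤ y ^ β := rpow_le_rpow_of_exponent_ge hy0 hy1 (by linarith)
    have h3 : |y ^ (β + δ)| = y ^ (β + δ) := abs_of_nonneg (rpow_nonneg hy0.le _)
    have h4 : f (1 - y) - c * y ^ β ≤ A * y ^ β := by
      calc f (1-y) - c * y^β ≤ |f (1-y) - c*y^β| := le_abs_self _
        _ ≤ C * y ^ (β+δ) := by rw [h3] at h; exact h
        _ ≤ A * y ^ (β+δ) := mul_le_mul_of_nonneg_right (le_max_left _ _) (rpow_nonneg hy0.le _)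
        _ ≤ A * y ^ β := mul_le_mul_of_nonneg_left h2 hA0
    have h5 : B * y ^ β = c * y^β + A * y^β := by rw [hBdef]; ring
    linarith
  -- the key moment bound
  have hKey : ∀ k : ℕ, (∫ x in (0:ℝ)..1, x ^ (k+1) * f x) ≤
      (1-ε)^(k+1) + (B * Real.Gamma (β+1)) * (1/((k:ℝ)+1))^(β+1) := by
    intro k
    set r : ℝ := (k:ℝ) + 1 with hrdef
    have hr0 : 0 < r := by positivity
    have hsub1 : Set.uIcc (0:ℝ) (1-ε) ⊆ Set.uIcc (0:ℝ) 1 := by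
      rw [uIcc_of_le h1ε0.le, uIcc_of_le zero_le_one]
      exact Icc_subset_Icc le_rfl (by linarith)
    have hsub2 : Set.uIcc (1-ε) (1:ℝ) ⊆ Set.uIcc (0:ℝ) 1 := by
      rw [uIcc_of_le hε1.le, uIcc_of_le zero_le_one]
      exact Icc_subset_Icc h1ε0.le le_rfl
    have I1 : IntervalIntegrable (fun x : ℝ => x ^ (k+1) * f x) volume 0 (1-ε) :=
      (hii k).mono_set hsub1
    have I2 : IntervalIntegrable (fun x : ℝ => x ^ (k+1) * f x) volume (1-ε) 1 :=
      (hii k).mono_set hsub2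
    have If1 : IntervalIntegrable f volume 0 (1-ε) := hfii.mono_set hsub1
    have If2 : IntervalIntegrable f volume (1-ε) 1 := hfii.mono_set hsub2
    -- part 1
    have hf1 : ∫ x in (0:ℝ)..(1-ε), f x ≤ 1 := by
      have hsplit := intervalIntegral.integral_add_adjacent_intervals If1 If2
      have h2 : 0 ≤ ∫ x in (1-ε:ℝ)..1, f x :=
        intervalIntegral.integral_nonneg hε1.le (fun u _ => hnn u)
      rw [hprob] at hsplit
      linarith
    have hP1 : ∫ x in (0:ℝ)..(1-ε), x^(k+1) * f x ≤ (1-ε)^(k+1) := by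
      have hmono : ∫ x in (0:ℝ)..(1-ε), x^(k+1)*f x
          ≤ ∫ x in (0:ℝ)..(1-ε), (1-ε)^(k+1) * f x := by
        refine intervalIntegral.integral_mono_on h1ε0.le I1 (If1.const_mul _) ?_
        intro x hx
        exact mul_le_mul_of_nonneg_right (pow_le_pow_left₀ hx.1 hx.2 _) (hnn x)
      rw [intervalIntegral.integral_const_mul] at hmono
      calc ∫ x in (0:ℝ)..(1-ε), x^(k+1)*f x
          ≤ (1-ε)^(k+1) * ∫ x in (0:ℝ)..(1-ε), f x := hmono
        _ ≤ (1-ε)^(k+1) * 1 := mul_le_mul_of_nonneg_left hf1 (pow_nonneg h1ε0.le _)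
        _ = (1-ε)^(k+1) := mul_one _
    -- part 2
    have hgInt : IntegrableOn (fun y : ℝ => y ^ β * Real.exp (-(r * y))) (Ioi 0) volume := by
      have h := integrableOn_rpow_mul_exp_neg_mul_rpow hβ (zero_lt_one' ℝ) hr0
      refine h.congr_fun (fun x hx => ?_) measurableSet_Ioi
      simp only [Real.rpow_one, neg_mul]
    have hgII : IntervalIntegrable (fun y : ℝ => y^β * Real.exp (-(r*y))) volume 0 ε :=
      (intervalIntegrable_iff_integrableOn_Ioc_of_le hε0.le).mpr
        (hgInt.mono_set Ioc_subset_Ioi_self)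
    have hgcII : IntervalIntegrable
        (fun x : ℝ => (1-x)^β * Real.exp (-(r*(1-x)))) volume (1-ε) 1 := by
      have h := (hgII.comp_sub_left 1).symm
      simpa using h
    have hP2a : ∫ x in (1-ε:ℝ)..1, x^(k+1)*f x
        ≤ ∫ x in (1-ε:ℝ)..1, B * ((1-x)^β * Real.exp (-(r*(1-x)))) := by
      refine intervalIntegral.integral_mono_ae_restrict hε1.le I2 (hgcII.const_mul B) ?_
      have hnull : (volume : Measure ℝ) ({1-ε, 1} : Set ℝ) = 0 :=
        (Set.toFinite ({1-ε, 1} : Set ℝ)).measure_zero _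
      have hnull2 : ∀ᵐ x : ℝ ∂volume, x ∉ ({1-ε, 1} : Set ℝ) := by
        rw [MeasureTheory.ae_iff]
        simpa only [not_not, Set.setOf_mem_eq] using hnull
      filter_upwards [ae_restrict_mem measurableSet_Icc, ae_restrict_of_ae hnull2] with x hx hx2
      simp only [Set.mem_insert_iff, Set.mem_singleton_iff, not_or] at hx2
      have hx1 : 1 - ε < x := lt_of_le_of_ne hx.1 (Ne.symm hx2.1)
      have hx3 : x < 1 := lt_of_le_of_ne hx.2 hx2.2
      have hy : (1 - x) ∈ Ioo (0:ℝ) ε := ⟨by linarith, by linarith⟩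
      have hfx : f x ≤ B * (1-x)^β := by
        have h := hfb (1-x) hy
        rwa [sub_sub_cancel] at h
      have hxe : x^(k+1) ≤ Real.exp (-(r*(1-x))) := by
        have h1 : x ≤ Real.exp (x - 1) := by
          have := Real.add_one_le_exp (x-1); linarith
        have h2 : x^(k+1) ≤ Real.exp (x-1)^(k+1) :=
          pow_le_pow_left₀ (by linarith) h1 _
        rw [← Real.exp_nat_mul] at h2
        calc x^(k+1) ≤ Real.exp ((k+1 : ℕ) * (x-1)) := h2
          _ = Real.exp (-(r*(1-x))) := by rw [hrdef]; push_cast; ring_nf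
      calc x^(k+1) * f x ≤ Real.exp (-(r*(1-x))) * (B * (1-x)^β) :=
            mul_le_mul hxe hfx (hnn x) (Real.exp_pos _).le
        _ = B * ((1-x)^β * Real.exp (-(r*(1-x)))) := by ring
    have hP2b : ∫ x in (1-ε:ℝ)..1, B * ((1-x)^β * Real.exp (-(r*(1-x))))
        = B * ∫ y in (0:ℝ)..ε, y^β * Real.exp (-(r*y)) := by
      rw [intervalIntegral.integral_const_mul]
      congr 1
      have h := intervalIntegral.integral_comp_sub_left (a := 1-ε) (b := 1)
        (fun y : ℝ => y^β * Real.exp (-(r*y))) 1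
      simpa using h
    have hP2c : ∫ y in (0:ℝ)..ε, y^β * Real.exp (-(r*y))
        ≤ (1/r)^(β+1) * Real.Gamma (β+1) := by
      rw [intervalIntegral.integral_of_le hε0.le]
      have hmono : ∫ y in Ioc (0:ℝ) ε, y^β * Real.exp (-(r*y))
          ≤ ∫ y in Ioi (0:ℝ), y^β * Real.exp (-(r*y)) := by
        refine setIntegral_mono_set hgInt ?_ (HasSubset.Subset.eventuallyLE Ioc_subset_Ioi_self)
        filter_upwards [ae_restrict_mem measurableSet_Ioi] with y hy
        exact mul_nonneg (rpow_nonneg (le_of_lt hy) _) (Real.exp_pos _).le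
      have hval := Real.integral_rpow_mul_exp_neg_mul_Ioi (show (0:ℝ) < β+1 by linarith) hr0
      rw [show β + 1 - 1 = β by ring] at hval
      rw [hval] at hmono
      exact hmono
    -- combine
    have hsplit := intervalIntegral.integral_add_adjacent_intervals I1 I2
    have hP2 : ∫ x in (1-ε:ℝ)..1, x^(k+1)*f x
        ≤ (B * Real.Gamma (β+1)) * (1/r)^(β+1) := by
      calc ∫ x in (1-ε:ℝ)..1, x^(k+1)*f x
          ≤ B * ∫ y in (0:ℝ)..ε, y^β * Real.exp (-(r*y)) := by rw [← hP2b]; exact hP2a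
        _ ≤ B * ((1/r)^(β+1) * Real.Gamma (β+1)) := mul_le_mul_of_nonneg_left hP2c hB.le
        _ = (B * Real.Gamma (β+1)) * (1/r)^(β+1) := by ring
    linarith [hsplit, hP1, hP2]
  -- nonnegativity of moments
  have hm0 : ∀ k : ℕ, 0 ≤ ∫ x in (0:ℝ)..1, x ^ (k+1) * f x := fun k =>
    intervalIntegral.integral_nonneg zero_le_one
      (fun x hx => mul_nonneg (pow_nonneg hx.1 _) (hnn x))
  -- summability of the two bounding series
  have hsa : Summable (fun k : ℕ => ((1-ε)^(k+1) : ℝ) ^ s) := by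
    have heq : ∀ k : ℕ, ((1-ε)^(k+1) : ℝ) ^ s = ((1-ε)^s)^k * (1-ε)^s := by
      intro k
      rw [← Real.rpow_natCast ((1-ε)^s) k, ← Real.rpow_mul h1ε0.le,
        ← Real.rpow_natCast (1-ε) (k+1), ← Real.rpow_mul h1ε0.le,
        ← Real.rpow_add h1ε0]
      push_cast; ring_nf
    have hr1 : (1-ε)^s < 1 := rpow_lt_one h1ε0.le hε1 hs0
    have hr0 : 0 ≤ (1-ε)^s := rpow_nonneg h1ε0.le s
    exact Summable.congr ((summable_geometric_of_lt_one hr0 hr1).mul_right _)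
      (fun k => (heq k).symm)
  have hsb : Summable (fun k : ℕ =>
      ((B * Real.Gamma (β+1)) * (1/((k:ℝ)+1))^(β+1)) ^ s) := by
    have heq : ∀ k : ℕ, ((B * Real.Gamma (β+1)) * (1/((k:ℝ)+1))^(β+1)) ^ s
        = (B * Real.Gamma (β+1)) ^ s * (1/((k:ℝ)+1))^((β+1)*s) := by
      intro k
      rw [mul_rpow (mul_nonneg hB.le (Real.Gamma_nonneg_of_nonneg (by linarith)))
        (rpow_nonneg (by positivity) _), ← Real.rpow_mul (by positivity)]
    have hsum : Summable (fun k : ℕ => (1/((k:ℝ)+1))^((β+1)*s)) := by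
      have h := (summable_nat_add_iff 1).mpr (Real.summable_one_div_nat_rpow.mpr hsβ)
      refine h.congr (fun k => ?_)
      rw [Real.div_rpow zero_le_one (by positivity), Real.one_rpow]
      push_cast
      ring_nf
    exact Summable.congr (hsum.mul_left _) (fun k => (heq k).symm)
  exact moment_aux_sum hs0 hm0 (fun k => pow_nonneg h1ε0.le _)
    (fun k => mul_nonneg (mul_nonneg hB.le (Real.Gamma_nonneg_of_nonneg (by linarith)))
      (rpow_nonneg (by positivity) _)) hKey hsa hsb
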